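/- If O is an observation (a wiring using no position constants) and W̄_p, W̄_q are two representations of the same word W with respect to position lists p and q, then O·W̄_p is nilpotent if and only if O·W̄_q is nilpotent. -/

import Mathlib

/-! First-order terms over variables `ℕ` and function symbols `ℕ` (each symbol
used with the arity of its argument list), substitutions, unification, and
flows `t ⊣ u` (with `Var(t) ⊆ Var(u)`, considered up to renaming). -/

/-- First-order terms. -/
inductive Term where
  | var : ℕ → Term
  | fn : ℕ → List Term → Term

mutual
/-- Apply a substitution to a term. -/
def Term.subst (θ : ℕ → Term) : Term → Term
  | .var n => θ n
  | .fn f ts => .fn f (Term.substList θ ts)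
/-- Apply a substitution to a list of terms. -/
def Term.substList (θ : ℕ → Term) : List Term → List Term
  | [] => []
  | t :: ts => Term.subst θ t :: Term.substList θ ts
end

mutual
/-- Variables occurring in a term. -/
def Term.vars : Term → Set ℕ
  | .var n => {n}
  | .fn _ ts => Term.varsList ts
/-- Variables occurring in a list of terms. -/
def Term.varsList : List Term → Set ℕ
  | [] => ∅
  | t :: ts => Term.vars t ∪ Term.varsList ts
end

/-- `θ` is a unifier of `t` and `u`. -/
def IsUnifier (θ : ℕ → Term) (t u : Term) : Prop := t.subst θ = u.subst θ

/-- `θ'` is an instance of `θ` (factors through `θ`). -/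
def InstanceOf (θ' θ : ℕ → Term) : Prop := ∃ ρ, ∀ n, θ' n = (θ n).subst ρ

/-- `θ` is a most general unifier of `t` and `u`. -/
def IsMGU (θ : ℕ → Term) (t u : Term) : Prop :=
  IsUnifier θ t u ∧ ∀ θ', IsUnifier θ' t u → InstanceOf θ' θ

/-- Apply a renaming (a bijection on variables) to a term. -/
def Term.rename (α : ℕ ≃ ℕ) (t : Term) : Term := t.subst fun n => .var (α n)

/-- Two terms are matchable if renamings of them with disjoint sets of
variables are unifiable. -/
def Matchable (t u : Term) : Prop :=
  ∃ α β : ℕ ≃ ℕ, Disjoint (t.rename α).vars (u.rename β).vars ∧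
    ∃ θ, IsUnifier θ (t.rename α) (u.rename β)

/-- A flow `t ⊣ u` with `Var(t) ⊆ Var(u)`. -/
structure RFlow where
  lhs : Term
  rhs : Term
  sub : lhs.vars ⊆ rhs.vars

instance : Inhabited RFlow := ⟨⟨.var 0, .var 0, Set.Subset.rfl⟩⟩

/-- Equality of flows up to renaming. -/
def FlowEquiv (f g : RFlow) : Prop :=
  ∃ α : ℕ ≃ ℕ, g.lhs = f.lhs.rename α ∧ g.rhs = f.rhs.rename α

/-- `r` is a resolution product of `f` and `g`: after renaming `g` apart from
`f`, the MGU `θ` of `f`'s right term and `g`'s left term exists and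
`r = θ(f.lhs) ⊣ θ(g.rhs)`. -/
def FlowCompRel (f g r : RFlow) : Prop :=
  ∃ g' : RFlow, FlowEquiv g g' ∧ Disjoint f.rhs.vars g'.lhs.vars ∧
    ∃ θ, IsMGU θ f.rhs g'.lhs ∧
      r.lhs = f.lhs.subst θ ∧ r.rhs = g'.rhs.subst θ

open Classical in
/-- The product of flows (`none` = undefined = 0). -/
noncomputable def fcomp (f g : RFlow) : Option RFlow :=
  if h : ∃ r, FlowCompRel f g r then some h.choose else none

/-- Product extended to possibly-undefined flows. -/
noncomputable def fcompO (a b : Option RFlow) : Option RFlow :=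
  a.bind fun f => b.bind fun g => fcomp f g

/-- Equality up to renaming of possibly-undefined flows. -/
def OEquiv (a b : Option RFlow) : Prop :=
  (a = none ∧ b = none) ∨ ∃ f g, a = some f ∧ b = some g ∧ FlowEquiv f g

/-! Flows up to renaming, and wirings (finite sets of flows). -/

/-- Flows considered up to renaming. -/
def FlowQ := Quot FlowEquiv

/-- The class of a flow. -/
def FlowQ.mk (f : RFlow) : FlowQ := Quot.mk _ f

noncomputable instance : DecidableEq FlowQ := Classical.decEq _

open Classical in
/-- The product of flows up to renaming (`none` = 0). -/
noncomputable def qcomp (a b : FlowQ) : Option FlowQ :=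
  (fcomp a.out b.out).map FlowQ.mk

/-- A wiring: a finite set of flows (up to renaming). -/
abbrev Wiring := Finset FlowQ

open Classical in
/-- Product of wirings: pointwise products of flows, keeping defined ones. -/
noncomputable def wmul (F G : Wiring) : Wiring :=
  (F ×ˢ G).biUnion fun p => (qcomp p.1 p.2).toFinset

/-- The unit wiring `{x ⊣ x}`. -/
noncomputable def wone : Wiring := {FlowQ.mk ⟨.var 0, .var 0, Set.Subset.rfl⟩}

/-! Words and their representations.  Function symbols are coded by natural
numbers: the binary symbol `•` is `1`, the constants `l`, `r`, `⋆` are `3`,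
`5`, `7`, the letter `a` of the alphabet is the constant `2a+9`, and the
position constants are the even numbers. -/

mutual
/-- Function symbols occurring in a term. -/
def Term.syms : Term → Set ℕ
  | .var _ => ∅
  | .fn f ts => insert f (Term.symsList ts)
/-- Function symbols occurring in a list of terms. -/
def Term.symsList : List Term → Set ℕ
  | [] => ∅
  | t :: ts => Term.syms t ∪ Term.symsList ts
end

/-- The closed term `a • (d • p)` for constants `a`, `d`, `p`. -/
def mk3 (a d p : ℕ) : Term := .fn 1 [.fn a [], .fn 1 [.fn d [], .fn p []]]

lemma vars_mk3 (a d p : ℕ) : (mk3 a d p).vars = ∅ := by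
  simp [mk3, Term.vars, Term.varsList]

/-- The constant `cᵢ` of the word `W`: `⋆` for `i = 0` and the `i`-th letter
of `W` otherwise. -/
def ci (W : List ℕ) (i : ℕ) : ℕ := if i = 0 then 7 else 2 * W.getD (i - 1) 0 + 9

/-- The term `cᵢ • r • pᵢ`. -/
def termR (W : List ℕ) (p : ℕ → ℕ) (i : ℕ) : Term := mk3 (ci W i) 5 (p i)

/-- The term `c_{i+1} • l • p_{i+1}` (indices mod `n+1`). -/
def termL (W : List ℕ) (p : ℕ → ℕ) (i : ℕ) : Term :=
  mk3 (ci W ((i + 1) % (W.length + 1))) 3 (p ((i + 1) % (W.length + 1)))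

/-- The representation `W̄_p` of the word `W` with positions `p`:
`Σᵢ (cᵢ • r • pᵢ ⇌ c_{i+1} • l • p_{i+1})`. -/
noncomputable def repW (W : List ℕ) (p : ℕ → ℕ) : Wiring :=
  (Finset.range (W.length + 1)).biUnion fun i =>
    {FlowQ.mk ⟨termR W p i, termL W p i, by
        rw [termR, termL, vars_mk3, vars_mk3]⟩,
     FlowQ.mk ⟨termL W p i, termR W p i, by
        rw [termR, termL, vars_mk3, vars_mk3]⟩}

/-- A valid list of positions for `W`: pairwise distinct position constants. -/
def ValidPos (W : List ℕ) (p : ℕ → ℕ) : Prop :=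
  (∀ i ≤ W.length, Even (p i)) ∧ Set.InjOn p {i | i ≤ W.length}

/-- An observation: a wiring in which no position constant occurs. -/
def IsObservation (O : Wiring) : Prop :=
  ∀ a ∈ O, ∀ s, s ∈ a.out.lhs.syms ∪ a.out.rhs.syms → ¬ Even s

/-- Powers of a wiring. -/
noncomputable def wpow (F : Wiring) : ℕ → Wiring
  | 0 => wone
  | n + 1 => wmul (wpow F n) F

/-- Nilpotency of a wiring. -/
def WNilpotent (F : Wiring) : Prop := ∃ n, 0 < n ∧ wpow F n = ∅


/-! ### Auxiliary development -/

section Aux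

/-! #### Term lemmas -/

mutual
theorem Term.subst_congr {θ θ' : ℕ → Term} : ∀ t : Term,
    (∀ n ∈ t.vars, θ n = θ' n) → t.subst θ = t.subst θ'
  | .var n, h => by simpa [Term.subst] using h n (by simp [Term.vars])
  | .fn f ts, h => by
      simp only [Term.subst]
      exact congrArg _ (Term.substList_congr ts (by simpa [Term.vars] using h))
theorem Term.substList_congr {θ θ' : ℕ → Term} : ∀ ts : List Term,
    (∀ n ∈ Term.varsList ts, θ n = θ' n) → Term.substList θ ts = Term.substList θ' ts
  | [], _ => rfl
  | t :: ts, h => by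
      simp only [Term.substList]
      exact congrArg₂ _ (Term.subst_congr t fun n hn => h n (by simp [Term.varsList, hn]))
        (Term.substList_congr ts fun n hn => h n (by simp [Term.varsList, hn]))
end

mutual
theorem Term.subst_var : ∀ t : Term, t.subst .var = t
  | .var n => rfl
  | .fn f ts => by simp only [Term.subst]; exact congrArg _ (Term.substList_var ts)
theorem Term.substList_var : ∀ ts : List Term, Term.substList .var ts = ts
  | [] => rfl
  | t :: ts => by
      simp only [Term.substList]
      exact congrArg₂ _ (Term.subst_var t) (Term.substList_var ts)
end

mutual
theorem Term.subst_subst (θ ρ : ℕ → Term) : ∀ t : Term,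
    (t.subst θ).subst ρ = t.subst fun n => (θ n).subst ρ
  | .var n => by simp [Term.subst]
  | .fn f ts => by
      simp only [Term.subst]
      exact congrArg _ (Term.substList_subst θ ρ ts)
theorem Term.substList_subst (θ ρ : ℕ → Term) : ∀ ts : List Term,
    Term.substList ρ (Term.substList θ ts) = Term.substList (fun n => (θ n).subst ρ) ts
  | [] => rfl
  | t :: ts => by
      simp only [Term.substList]
      exact congrArg₂ _ (Term.subst_subst θ ρ t) (Term.substList_subst θ ρ ts)
end

theorem Term.subst_ground {t : Term} (h : t.vars = ∅) (θ : ℕ → Term) : t.subst θ = t :=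
  (Term.subst_congr t (by simp [h])).trans (Term.subst_var t)

theorem Term.rename_subst (α : ℕ ≃ ℕ) (θ : ℕ → Term) (t : Term) :
    (t.rename α).subst θ = t.subst fun n => θ (α n) := by
  rw [Term.rename, Term.subst_subst]
  exact Term.subst_congr t fun n _ => by simp [Term.subst]

theorem Term.rename_refl (t : Term) : t.rename (Equiv.refl ℕ) = t := Term.subst_var t

theorem Term.rename_rename (α β : ℕ ≃ ℕ) (t : Term) :
    (t.rename α).rename β = t.rename (α.trans β) := by
  show (t.rename α).subst (fun n => .var (β n)) = t.subst fun n => .var ((α.trans β) n)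
  rw [Term.rename_subst]; rfl

theorem Term.rename_ground {t : Term} (h : t.vars = ∅) (α : ℕ ≃ ℕ) : t.rename α = t :=
  Term.subst_ground h _

/-! #### Symbol renaming on terms -/

mutual
/-- Apply a function to all function symbols of a term. -/
def Term.symmap (σ : ℕ → ℕ) : Term → Term
  | .var n => .var n
  | .fn f ts => .fn (σ f) (Term.symmapList σ ts)
def Term.symmapList (σ : ℕ → ℕ) : List Term → List Term
  | [] => []
  | t :: ts => Term.symmap σ t :: Term.symmapList σ ts
end

mutual
theorem Term.symmap_vars (σ : ℕ → ℕ) : ∀ t : Term, (t.symmap σ).vars = t.vars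
  | .var n => rfl
  | .fn f ts => by
      simp only [Term.symmap, Term.vars]
      exact Term.symmapList_vars σ ts
theorem Term.symmapList_vars (σ : ℕ → ℕ) : ∀ ts : List Term,
    Term.varsList (Term.symmapList σ ts) = Term.varsList ts
  | [] => rfl
  | t :: ts => by
      simp only [Term.symmapList, Term.varsList]
      rw [Term.symmap_vars σ t, Term.symmapList_vars σ ts]
end

mutual
theorem Term.symmap_subst (σ : ℕ → ℕ) (θ : ℕ → Term) : ∀ t : Term,
    (t.subst θ).symmap σ = (t.symmap σ).subst fun n => (θ n).symmap σ
  | .var n => by simp [Term.subst, Term.symmap]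
  | .fn f ts => by
      simp only [Term.subst, Term.symmap]
      exact congrArg _ (Term.symmapList_subst σ θ ts)
theorem Term.symmapList_subst (σ : ℕ → ℕ) (θ : ℕ → Term) : ∀ ts : List Term,
    Term.symmapList σ (Term.substList θ ts) =
      Term.substList (fun n => (θ n).symmap σ) (Term.symmapList σ ts)
  | [] => rfl
  | t :: ts => by
      simp only [Term.substList, Term.symmapList]
      exact congrArg₂ _ (Term.symmap_subst σ θ t) (Term.symmapList_subst σ θ ts)
end

mutual
theorem Term.symmap_symmap (σ τ : ℕ → ℕ) : ∀ t : Term,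
    (t.symmap σ).symmap τ = t.symmap fun n => τ (σ n)
  | .var n => rfl
  | .fn f ts => by
      simp only [Term.symmap]
      exact congrArg _ (Term.symmapList_symmap σ τ ts)
theorem Term.symmapList_symmap (σ τ : ℕ → ℕ) : ∀ ts : List Term,
    Term.symmapList τ (Term.symmapList σ ts) = Term.symmapList (fun n => τ (σ n)) ts
  | [] => rfl
  | t :: ts => by
      simp only [Term.symmapList]
      exact congrArg₂ _ (Term.symmap_symmap σ τ t) (Term.symmapList_symmap σ τ ts)
end

mutual
theorem Term.symmap_fix {σ : ℕ → ℕ} : ∀ t : Term, (∀ s ∈ t.syms, σ s = s) → t.symmap σ = t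
  | .var n, _ => rfl
  | .fn f ts, h => by
      simp only [Term.symmap]
      refine congrArg₂ _ (h f (by simp [Term.syms])) ?_
      exact Term.symmapList_fix ts fun s hs => h s (by simp [Term.syms, hs])
theorem Term.symmapList_fix {σ : ℕ → ℕ} : ∀ ts : List Term,
    (∀ s ∈ Term.symsList ts, σ s = s) → Term.symmapList σ ts = ts
  | [], _ => rfl
  | t :: ts, h => by
      simp only [Term.symmapList]
      exact congrArg₂ _ (Term.symmap_fix t fun s hs => h s (by simp [Term.symsList, hs]))
        (Term.symmapList_fix ts fun s hs => h s (by simp [Term.symsList, hs]))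
end

theorem Term.symmap_id (t : Term) : t.symmap (fun n => n) = t :=
  Term.symmap_fix t fun _ _ => rfl

theorem Term.symmap_roundtrip (σ : ℕ ≃ ℕ) (t : Term) : (t.symmap σ).symmap σ.symm = t := by
  rw [Term.symmap_symmap]
  simp only [Equiv.symm_apply_apply]
  exact Term.symmap_id t

theorem Term.symmap_roundtrip' (σ : ℕ ≃ ℕ) (t : Term) : (t.symmap σ.symm).symmap σ = t := by
  rw [Term.symmap_symmap]
  simp only [Equiv.apply_symm_apply]
  exact Term.symmap_id t

theorem Term.symmap_rename (σ : ℕ → ℕ) (α : ℕ ≃ ℕ) (t : Term) :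
    (t.rename α).symmap σ = (t.symmap σ).rename α := by
  rw [Term.rename, Term.symmap_subst, Term.rename]
  exact Term.subst_congr _ fun n _ => rfl

/-! #### Flow lemmas -/

theorem RFlow.ext' : ∀ {f g : RFlow}, f.lhs = g.lhs → f.rhs = g.rhs → f = g
  | ⟨_, _, _⟩, ⟨_, _, _⟩, rfl, rfl => rfl

/-- A ground (variable-free) flow. -/
def RFlow.Ground (f : RFlow) : Prop := f.lhs.vars = ∅ ∧ f.rhs.vars = ∅

theorem RFlow.ground_of_rhs {f : RFlow} (h : f.rhs.vars = ∅) : f.Ground :=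
  ⟨Set.eq_empty_of_subset_empty (h ▸ f.sub), h⟩

theorem flowEquiv_refl (f : RFlow) : FlowEquiv f f :=
  ⟨Equiv.refl ℕ, (Term.rename_refl _).symm, (Term.rename_refl _).symm⟩

theorem flowEquiv_symm {f g : RFlow} : FlowEquiv f g → FlowEquiv g f := by
  rintro ⟨α, h1, h2⟩
  exact ⟨α.symm, by rw [h1, Term.rename_rename, Equiv.self_trans_symm, Term.rename_refl],
    by rw [h2, Term.rename_rename, Equiv.self_trans_symm, Term.rename_refl]⟩

theorem flowEquiv_trans {f g h : RFlow} : FlowEquiv f g → FlowEquiv g h → FlowEquiv f h := by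
  rintro ⟨α, h1, h2⟩ ⟨β, h3, h4⟩
  exact ⟨α.trans β, by rw [h3, h1, Term.rename_rename], by rw [h4, h2, Term.rename_rename]⟩

theorem flowEquiv_equivalence : Equivalence FlowEquiv :=
  ⟨flowEquiv_refl, flowEquiv_symm, flowEquiv_trans⟩

theorem FlowQ.mk_eq_mk {f g : RFlow} : FlowQ.mk f = FlowQ.mk g ↔ FlowEquiv f g :=
  Quot.eq.trans flowEquiv_equivalence.eqvGen_iff

theorem flowEquiv_out_mk (f : RFlow) : FlowEquiv (FlowQ.mk f).out f :=
  FlowQ.mk_eq_mk.mp (Quot.out_eq _)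

theorem ground_flowEquiv {f g : RFlow} (hf : f.Ground) (h : FlowEquiv f g) : g = f := by
  obtain ⟨α, h1, h2⟩ := h
  exact RFlow.ext' (by rw [h1, Term.rename_ground hf.1]) (by rw [h2, Term.rename_ground hf.2])

theorem out_mk_ground {f : RFlow} (hf : f.Ground) : (FlowQ.mk f).out = f :=
  ground_flowEquiv hf (flowEquiv_symm (flowEquiv_out_mk f))

/-- Symbol renaming on flows. -/
def symF (σ : ℕ → ℕ) (f : RFlow) : RFlow :=
  ⟨f.lhs.symmap σ, f.rhs.symmap σ, by
    rw [Term.symmap_vars, Term.symmap_vars]; exact f.sub⟩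

theorem symF_ground {σ : ℕ → ℕ} {f : RFlow} (hf : f.Ground) : (symF σ f).Ground :=
  ⟨by simp [symF, Term.symmap_vars, hf.1], by simp [symF, Term.symmap_vars, hf.2]⟩

theorem symF_flowEquiv (σ : ℕ → ℕ) {f g : RFlow} (h : FlowEquiv f g) :
    FlowEquiv (symF σ f) (symF σ g) := by
  obtain ⟨α, h1, h2⟩ := h
  exact ⟨α, by simp [symF, h1, Term.symmap_rename], by simp [symF, h2, Term.symmap_rename]⟩

theorem symF_symF (σ : ℕ ≃ ℕ) (f : RFlow) : symF σ.symm (symF σ f) = f :=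
  RFlow.ext' (Term.symmap_roundtrip σ f.lhs) (Term.symmap_roundtrip σ f.rhs)

theorem symF_symF' (σ : ℕ ≃ ℕ) (f : RFlow) : symF σ (symF σ.symm f) = f :=
  RFlow.ext' (Term.symmap_roundtrip' σ f.lhs) (Term.symmap_roundtrip' σ f.rhs)

/-! #### Resolution with a ground right factor -/

theorem compRel_ground_unique {f g r r' : RFlow} (hg : g.Ground)
    (h : FlowCompRel f g r) (h' : FlowCompRel f g r') : r = r' := by
  obtain ⟨g1, he1, -, θ1, hm1, hl1, hr1⟩ := h
  obtain ⟨g2, he2, -, θ2, hm2, hl2, hr2⟩ := h'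
  rw [ground_flowEquiv hg he1] at hm1 hr1
  rw [ground_flowEquiv hg he2] at hm2 hr2
  have hrr : r.rhs = g.rhs := hr1.trans (Term.subst_ground hg.2 θ1)
  have hrr' : r'.rhs = g.rhs := hr2.trans (Term.subst_ground hg.2 θ2)
  obtain ⟨ρ, hρ⟩ := hm1.2 θ2 hm2.1
  have hrl : r.lhs.vars = ∅ :=
    Set.eq_empty_of_subset_empty (by rw [← hg.2, ← hrr]; exact r.sub)
  refine RFlow.ext' ?_ (hrr.trans hrr'.symm)
  have : r'.lhs = r.lhs.subst ρ := by
    rw [hl2, hl1]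
    have : θ2 = fun n => (θ1 n).subst ρ := funext hρ
    rw [this, ← Term.subst_subst]
  rw [this, Term.subst_ground hrl]

theorem compRel_ground {f g r : RFlow} (hg : g.Ground) (h : FlowCompRel f g r) : r.Ground := by
  obtain ⟨g1, he1, -, θ, hm, hl, hr⟩ := h
  rw [ground_flowEquiv hg he1] at hr
  exact RFlow.ground_of_rhs (by rw [hr, Term.subst_ground hg.2, hg.2])

theorem compRel_rename_left {f f1 g r : RFlow} (hg : g.Ground) (hf : FlowEquiv f f1)
    (h : FlowCompRel f g r) : FlowCompRel f1 g r := by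
  obtain ⟨α, hfl, hfr⟩ := hf
  obtain ⟨g1, he1, -, θ, hm, hl, hr⟩ := h
  rw [ground_flowEquiv hg he1] at hm hr
  refine ⟨g, flowEquiv_refl g, by simp [hg.1], fun n => θ (α.symm n), ⟨?_, ?_⟩, ?_, ?_⟩
  · show (f1.rhs).subst _ = (g.lhs).subst _
    rw [hfr, Term.rename_subst, Term.subst_ground hg.1]
    have : (fun n => θ (α.symm (α n))) = θ := funext fun n => by simp
    rw [this, hm.1, Term.subst_ground hg.1]
  · intro θ'' h''
    have h2 : IsUnifier (fun n => θ'' (α n)) f.rhs g.lhs := by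
      show f.rhs.subst _ = g.lhs.subst _
      rw [Term.subst_ground hg.1, ← Term.rename_subst α θ'' f.rhs, ← hfr, h'',
        Term.subst_ground hg.1]
    obtain ⟨ρ, hρ⟩ := hm.2 _ h2
    exact ⟨ρ, fun m => by
      have := hρ (α.symm m)
      simpa using this⟩
  · rw [hl, hfl, Term.rename_subst]
    congr 1
    exact (funext fun n => by simp).symm
  · rw [hr, Term.subst_ground hg.2, Term.subst_ground hg.2]

theorem symF_lhs (σ : ℕ → ℕ) (f : RFlow) : (symF σ f).lhs = f.lhs.symmap σ := rfl
theorem symF_rhs (σ : ℕ → ℕ) (f : RFlow) : (symF σ f).rhs = f.rhs.symmap σ := rfl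

theorem compRel_symmap (σ : ℕ ≃ ℕ) {f g r : RFlow} (hg : g.Ground) (h : FlowCompRel f g r) :
    FlowCompRel (symF σ f) (symF σ g) (symF σ r) := by
  obtain ⟨g1, he1, -, θ, hm, hl, hr⟩ := h
  rw [ground_flowEquiv hg he1] at hm hr
  have hgl : (g.lhs.symmap (⇑σ)).vars = ∅ := by rw [Term.symmap_vars]; exact hg.1
  have hgr : (g.rhs.symmap (⇑σ)).vars = ∅ := by rw [Term.symmap_vars]; exact hg.2
  have hu : f.rhs.subst θ = g.lhs := by
    have h0 : f.rhs.subst θ = g.lhs.subst θ := hm.1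
    rw [h0, Term.subst_ground hg.1]
  refine ⟨symF σ g, flowEquiv_refl _, by simp [symF_lhs, hgl], fun n => (θ n).symmap σ,
    ⟨?_, ?_⟩, ?_, ?_⟩
  · show ((symF σ f).rhs).subst _ = ((symF σ g).lhs).subst _
    rw [symF_lhs, symF_rhs, Term.subst_ground hgl, ← Term.symmap_subst, hu]
  · intro θ'' h''
    have h'' : (f.rhs.symmap (⇑σ)).subst θ'' = g.lhs.symmap (⇑σ) := by
      have h0 : (f.rhs.symmap (⇑σ)).subst θ'' = (g.lhs.symmap (⇑σ)).subst θ'' := h''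
      rw [h0, Term.subst_ground hgl]
    have h2 : IsUnifier (fun n => (θ'' n).symmap σ.symm) f.rhs g.lhs := by
      show f.rhs.subst _ = g.lhs.subst _
      rw [Term.subst_ground hg.1]
      calc f.rhs.subst (fun n => (θ'' n).symmap σ.symm)
          = ((f.rhs.symmap (⇑σ)).symmap (⇑σ.symm)).subst (fun n => (θ'' n).symmap σ.symm) := by
            rw [Term.symmap_roundtrip]
        _ = ((f.rhs.symmap (⇑σ)).subst θ'').symmap (⇑σ.symm) := by
            rw [Term.symmap_subst]
        _ = (g.lhs.symmap (⇑σ)).symmap (⇑σ.symm) := by rw [h'']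
        _ = g.lhs := Term.symmap_roundtrip σ _
    obtain ⟨ρ, hρ⟩ := hm.2 _ h2
    refine ⟨fun m => (ρ m).symmap σ, fun n => ?_⟩
    calc θ'' n = ((θ'' n).symmap (⇑σ.symm)).symmap (⇑σ) := (Term.symmap_roundtrip' σ _).symm
    _ = ((θ n).subst ρ).symmap (⇑σ) := by
        rw [show Term.symmap (⇑σ.symm) (θ'' n) = Term.subst ρ (θ n) from hρ n]
    _ = ((θ n).symmap (⇑σ)).subst fun m => (ρ m).symmap (⇑σ) := Term.symmap_subst _ ρ (θ n)
  · show (symF σ r).lhs = ((symF σ f).lhs).subst _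
    rw [symF_lhs, symF_lhs, hl, Term.symmap_subst]
  · show (symF σ r).rhs = ((symF σ g).rhs).subst _
    rw [symF_rhs, symF_rhs, hr, Term.subst_ground hg.2, Term.subst_ground hgr]

theorem fcomp_eq_some_iff {f g r : RFlow} (hg : g.Ground) :
    fcomp f g = some r ↔ FlowCompRel f g r := by
  unfold fcomp
  split
  · rename_i h
    constructor
    · intro h2
      cases Option.some.inj h2
      exact h.choose_spec
    · intro hc
      exact congrArg some (compRel_ground_unique hg h.choose_spec hc)
  · rename_i h
    simp only [false_iff, reduceCtorEq]
    exact fun hc => h ⟨r, hc⟩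

theorem fcomp_eq_none_iff {f g : RFlow} : fcomp f g = none ↔ ¬ ∃ r, FlowCompRel f g r := by
  unfold fcomp
  split
  · rename_i h; simp [h]
  · rename_i h; simp [h]

theorem fcomp_congr_left {f f1 g : RFlow} (hg : g.Ground) (hf : FlowEquiv f f1) :
    fcomp f1 g = fcomp f g := by
  cases hh : fcomp f g with
  | some r =>
      exact (fcomp_eq_some_iff hg).mpr
        (compRel_rename_left hg hf ((fcomp_eq_some_iff hg).mp hh))
  | none =>
      rw [fcomp_eq_none_iff] at hh ⊢
      rintro ⟨r, hr⟩
      exact hh ⟨r, compRel_rename_left hg (flowEquiv_symm hf) hr⟩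

theorem fcomp_symmap (σ : ℕ ≃ ℕ) {f g : RFlow} (hg : g.Ground) :
    fcomp (symF σ f) (symF σ g) = Option.map (symF σ) (fcomp f g) := by
  cases hh : fcomp f g with
  | some r =>
      simp only [Option.map_some]
      exact (fcomp_eq_some_iff (symF_ground hg)).mpr
        (compRel_symmap σ hg ((fcomp_eq_some_iff hg).mp hh))
  | none =>
      simp only [Option.map_none]
      rw [fcomp_eq_none_iff] at hh ⊢
      rintro ⟨r, hr⟩
      have := compRel_symmap σ.symm (symF_ground hg) hr
      rw [show (σ.symm : ℕ ≃ ℕ) = σ.symm from rfl] at this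
      rw [symF_symF σ f, symF_symF σ g] at this
      exact hh ⟨symF (⇑σ.symm) r, this⟩

/-! #### Wiring level -/

/-- Symbol renaming on flow classes. -/
noncomputable def Fmap (σ : ℕ → ℕ) (a : FlowQ) : FlowQ := FlowQ.mk (symF σ a.out)

theorem Fmap_mk (σ : ℕ → ℕ) (f : RFlow) : Fmap σ (FlowQ.mk f) = FlowQ.mk (symF σ f) :=
  FlowQ.mk_eq_mk.mpr (symF_flowEquiv σ (flowEquiv_out_mk f))

theorem out_Fmap_ground {σ : ℕ → ℕ} {b : FlowQ} (hb : b.out.Ground) :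
    (Fmap σ b).out = symF σ b.out := out_mk_ground (symF_ground hb)

theorem qcomp_symmap (σ : ℕ ≃ ℕ) {a b : FlowQ} (hb : (Quot.out b).Ground) :
    qcomp (Fmap σ a) (Fmap σ b) = Option.map (Fmap σ) (qcomp a b) := by
  unfold qcomp
  have h4 : fcomp (Fmap (⇑σ) a).out (symF (⇑σ) b.out) =
      fcomp (symF (⇑σ) a.out) (symF (⇑σ) b.out) :=
    fcomp_congr_left (symF_ground hb)
      (flowEquiv_symm (flowEquiv_out_mk (symF (⇑σ) a.out)))
  rw [out_Fmap_ground hb, h4, fcomp_symmap σ hb]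
  cases fcomp a.out b.out with
  | none => rfl
  | some r => simp [Fmap_mk]

/-- Symbol renaming on wirings. -/
noncomputable def Wmap (σ : ℕ → ℕ) (F : Wiring) : Wiring := F.image (Fmap σ)

theorem wmul_symmap (σ : ℕ ≃ ℕ) {A B : Wiring} (hB : ∀ b ∈ B, (Quot.out b).Ground) :
    wmul (Wmap σ A) (Wmap σ B) = Wmap σ (wmul A B) := by
  ext r
  simp only [wmul, Wmap, Finset.mem_biUnion, Finset.mem_product, Finset.mem_image,
    Option.mem_toFinset, Prod.exists]
  constructor
  · rintro ⟨x, y, ⟨⟨a, ha, rfl⟩, ⟨b, hb, rfl⟩⟩, hr⟩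
    rw [qcomp_symmap σ (hB b hb)] at hr
    rw [Option.mem_def, Option.map_eq_some_iff] at hr
    obtain ⟨r0, hr0, rfl⟩ := hr
    exact ⟨r0, ⟨a, b, ⟨ha, hb⟩, hr0⟩, rfl⟩
  · rintro ⟨r0, ⟨a, b, ⟨ha, hb⟩, hr0⟩, rfl⟩
    refine ⟨Fmap σ a, Fmap σ b, ⟨⟨a, ha, rfl⟩, ⟨b, hb, rfl⟩⟩, ?_⟩
    rw [qcomp_symmap σ (hB b hb), Option.mem_def, Option.map_eq_some_iff]
    exact ⟨r0, hr0, rfl⟩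

theorem fcomp_some_compRel {f g r : RFlow} (h : fcomp f g = some r) : FlowCompRel f g r := by
  unfold fcomp at h
  split at h
  · rename_i hex
    cases Option.some.inj h
    exact hex.choose_spec
  · exact absurd h (by simp)

theorem wmul_ground {A B : Wiring} (hB : ∀ b ∈ B, (Quot.out b).Ground) :
    ∀ r ∈ wmul A B, (Quot.out r).Ground := by
  intro r hr
  simp only [wmul, Finset.mem_biUnion, Finset.mem_product, Option.mem_toFinset, Prod.exists] at hr
  obtain ⟨a, b, ⟨ha, hb⟩, hr⟩ := hr
  rw [Option.mem_def] at hr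
  unfold qcomp at hr
  rw [Option.map_eq_some_iff] at hr
  obtain ⟨r0, hr0, rfl⟩ := hr
  have hg := compRel_ground (hB b hb) (fcomp_some_compRel hr0)
  rw [out_mk_ground hg]
  exact hg

theorem wpow_symmap (σ : ℕ ≃ ℕ) {F : Wiring} (hF : ∀ b ∈ F, (Quot.out b).Ground) :
    ∀ n, wpow (Wmap σ F) n = Wmap σ (wpow F n)
  | 0 => by
      show wone = Wmap σ wone
      have h0 : symF (⇑σ) ⟨.var 0, .var 0, Set.Subset.rfl⟩ = ⟨.var 0, .var 0, Set.Subset.rfl⟩ :=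
        RFlow.ext' (by simp [symF_lhs, Term.symmap]) (by simp [symF_rhs, Term.symmap])
      rw [wone, Wmap, Finset.image_singleton, Fmap_mk, h0]
  | n + 1 => by
      show wmul (wpow (Wmap σ F) n) (Wmap σ F) = Wmap σ (wmul (wpow F n) F)
      rw [wpow_symmap σ hF n, wmul_symmap σ hF]

end Aux

/-! ### Construction of the symbol permutation -/

theorem exists_perm_nat (m : ℕ) (a b : ℕ → ℕ) (ha : Set.InjOn a (Set.Iio m))
    (hb : Set.InjOn b (Set.Iio m)) : ∃ π : Equiv.Perm ℕ, ∀ i < m, π (a i) = b i := by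
  classical
  set A : Set ℕ := a '' Set.Iio m with hA
  set B : Set ℕ := b '' Set.Iio m with hB
  have hAfin : A.Finite := (Set.finite_Iio m).image a
  have hBfin : B.Finite := (Set.finite_Iio m).image b
  haveI : Infinite ↥Aᶜ := (hAfin.infinite_compl).to_subtype
  haveI : Infinite ↥Bᶜ := (hBfin.infinite_compl).to_subtype
  obtain ⟨ec⟩ : Nonempty (↥Aᶜ ≃ ↥Bᶜ) := inferInstance
  let e : ↥A ≃ ↥B :=
    (Equiv.Set.imageOfInjOn a (Set.Iio m) ha).symm.trans (Equiv.Set.imageOfInjOn b (Set.Iio m) hb)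
  refine ⟨(Equiv.Set.sumCompl A).symm.trans ((e.sumCongr ec).trans (Equiv.Set.sumCompl B)), ?_⟩
  intro i hi
  have hmem : a i ∈ A := ⟨i, hi, rfl⟩
  simp only [Equiv.trans_apply, Equiv.Set.sumCompl_symm_apply_of_mem hmem,
    Equiv.sumCongr_apply, Sum.map_inl, Equiv.Set.sumCompl_apply_inl]
  show ((e ⟨a i, hmem⟩ : ↥B) : ℕ) = b i
  set z := (Equiv.Set.imageOfInjOn a (Set.Iio m) ha).symm ⟨a i, hmem⟩ with hz
  have h1 : a (z : ℕ) = a i := by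
    have := (Equiv.Set.imageOfInjOn a (Set.Iio m) ha).apply_symm_apply ⟨a i, hmem⟩
    exact congrArg Subtype.val this
  have h2 : (z : ℕ) = i := ha z.2 hi h1
  show b (z : ℕ) = b i
  rw [h2]

/-- The even numbers are the range of `2 * ·`. -/
def evenEquiv : ℕ ≃ {x : ℕ // Even x} where
  toFun n := ⟨2 * n, even_two_mul n⟩
  invFun x := x.1 / 2
  left_inv n := by simp
  right_inv x := by
    obtain ⟨k, hk⟩ := x.2
    apply Subtype.ext
    simp only
    omega

theorem exists_symbol_perm (W : List ℕ) (p q : ℕ → ℕ) (hp : ValidPos W p) (hq : ValidPos W q) :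
    ∃ σ : Equiv.Perm ℕ, (∀ s, ¬ Even s → σ s = s) ∧ ∀ i ≤ W.length, σ (p i) = q i := by
  classical
  set m := W.length + 1 with hm
  have hainj : Set.InjOn (fun i => p i / 2) (Set.Iio m) := by
    intro i hi j hj hij
    have hpi := hp.1 i (by simpa [hm, Nat.lt_succ_iff] using hi)
    have hpj := hp.1 j (by simpa [hm, Nat.lt_succ_iff] using hj)
    obtain ⟨ki, hki⟩ := hpi
    obtain ⟨kj, hkj⟩ := hpj
    have : p i = p j := by simp only at hij; omega
    exact hp.2 (by simpa [hm, Nat.lt_succ_iff] using hi) (by simpa [hm, Nat.lt_succ_iff] using hj) this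
  have hbinj : Set.InjOn (fun i => q i / 2) (Set.Iio m) := by
    intro i hi j hj hij
    have hqi := hq.1 i (by simpa [hm, Nat.lt_succ_iff] using hi)
    have hqj := hq.1 j (by simpa [hm, Nat.lt_succ_iff] using hj)
    obtain ⟨ki, hki⟩ := hqi
    obtain ⟨kj, hkj⟩ := hqj
    have : q i = q j := by simp only at hij; omega
    exact hq.2 (by simpa [hm, Nat.lt_succ_iff] using hi) (by simpa [hm, Nat.lt_succ_iff] using hj) this
  obtain ⟨π, hπ⟩ := exists_perm_nat m _ _ hainj hbinj
  refine ⟨π.extendDomain evenEquiv, ?_, ?_⟩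
  · intro s hs
    exact Equiv.Perm.extendDomain_apply_not_subtype π evenEquiv hs
  · intro i hi
    have hpi : Even (p i) := hp.1 i hi
    have hqi : Even (q i) := hq.1 i hi
    rw [Equiv.Perm.extendDomain_apply_subtype π evenEquiv hpi]
    have h1 : (evenEquiv.symm ⟨p i, hpi⟩) = p i / 2 := rfl
    have h2 : π (p i / 2) = q i / 2 := hπ i (by omega)
    rw [h1, h2]
    show 2 * (q i / 2) = q i
    obtain ⟨k, hk⟩ := hqi
    omega

/-! ### Representations are ground and σ-related -/

theorem ground_out {f : RFlow} (h : f.Ground) : (Quot.out (FlowQ.mk f)).Ground := by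
  rw [show Quot.out (FlowQ.mk f) = (FlowQ.mk f).out from rfl, out_mk_ground h]; exact h

theorem repW_ground (W : List ℕ) (p : ℕ → ℕ) :
    ∀ b ∈ repW W p, (Quot.out b).Ground := by
  intro b hb
  simp only [repW, Finset.mem_biUnion, Finset.mem_insert, Finset.mem_singleton] at hb
  obtain ⟨i, -, hb | hb⟩ := hb <;> subst hb
  · exact ground_out ⟨by show (termR W p i).vars = ∅; rw [termR, vars_mk3],
      by show (termL W p i).vars = ∅; rw [termL, vars_mk3]⟩
  · exact ground_out ⟨by show (termL W p i).vars = ∅; rw [termL, vars_mk3],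
      by show (termR W p i).vars = ∅; rw [termR, vars_mk3]⟩

theorem ci_odd (W : List ℕ) (i : ℕ) : ¬ Even (ci W i) := by
  rw [ci]
  split
  · decide
  · rintro ⟨k, hk⟩; omega

theorem symmap_mk3 (σ : ℕ → ℕ) (a d c : ℕ) (h1 : σ 1 = 1) :
    (mk3 a d c).symmap σ = mk3 (σ a) (σ d) (σ c) := by
  simp [mk3, Term.symmap, Term.symmapList, h1]

theorem Wmap_repW (σ : Equiv.Perm ℕ) (W : List ℕ) (p q : ℕ → ℕ)
    (hodd : ∀ s, ¬ Even s → σ s = s) (hpq : ∀ i ≤ W.length, σ (p i) = q i) :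
    Wmap σ (repW W p) = repW W q := by
  have h1 : σ 1 = 1 := hodd 1 (by decide)
  have h3 : σ 3 = 3 := hodd 3 (by decide)
  have h5 : σ 5 = 5 := hodd 5 (by decide)
  have hR : ∀ i ≤ W.length, (termR W p i).symmap σ = termR W q i := by
    intro i hi
    rw [termR, termR, symmap_mk3 σ _ _ _ h1, hodd _ (ci_odd W i), h5, hpq i hi]
  have hL : ∀ i ≤ W.length, (termL W p i).symmap σ = termL W q i := by
    intro i _
    have hj : (i + 1) % (W.length + 1) ≤ W.length :=
      Nat.lt_succ_iff.mp (Nat.mod_lt _ (Nat.succ_pos _))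
    rw [termL, termL, symmap_mk3 σ _ _ _ h1, hodd _ (ci_odd W _), h3, hpq _ hj]
  rw [repW, repW, Wmap, Finset.biUnion_image]
  refine Finset.biUnion_congr rfl ?_
  intro i hi
  have hi' : i ≤ W.length := Nat.lt_succ_iff.mp (Finset.mem_range.mp hi)
  rw [show ∀ x y : FlowQ, ({x, y} : Finset FlowQ) = insert x {y} from fun _ _ => rfl,
    Finset.image_insert, Finset.image_singleton, Fmap_mk, Fmap_mk]
  refine congrArg₂ (fun x y => (insert x {y} : Finset FlowQ)) ?_ ?_
  · exact congrArg FlowQ.mk (RFlow.ext'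
      (by show Term.symmap (⇑σ) (termR W p i) = termR W q i; exact hR i hi')
      (by show Term.symmap (⇑σ) (termL W p i) = termL W q i; exact hL i hi'))
  · exact congrArg FlowQ.mk (RFlow.ext'
      (by show Term.symmap (⇑σ) (termL W p i) = termL W q i; exact hL i hi')
      (by show Term.symmap (⇑σ) (termR W p i) = termR W q i; exact hR i hi'))


/-- normativity: for an observation `O` and two representations
`W̄_p`, `W̄_q` of the same word `W`, `O·W̄_p` is nilpotent iff `O·W̄_q` is. -/
theorem normativity (O : Wiring) (W : List ℕ) (p q : ℕ → ℕ)
    (hO : IsObservation O) (hp : ValidPos W p) (hq : ValidPos W q) :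
    WNilpotent (wmul O (repW W p)) ↔ WNilpotent (wmul O (repW W q)) := by
  obtain ⟨σ, hodd, hpq⟩ := exists_symbol_perm W p q hp hq
  have hO' : Wmap σ O = O := by
    rw [Wmap]
    rw [show Finset.image (Fmap ⇑σ) O = Finset.image id O from
      Finset.image_congr fun a ha => ?_, Finset.image_id]
    show Fmap (⇑σ) a = a
    rw [Fmap]
    have h1 : symF (⇑σ) a.out = a.out := by
      refine RFlow.ext' (Term.symmap_fix _ fun s hs => ?_) (Term.symmap_fix _ fun s hs => ?_)
      · exact hodd s (hO a ha s (Set.mem_union_left _ hs))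
      · exact hodd s (hO a ha s (Set.mem_union_right _ hs))
    rw [h1]
    exact Quot.out_eq a
  have hRp := repW_ground W p
  have key : wmul O (repW W q) = Wmap σ (wmul O (repW W p)) := by
    rw [← wmul_symmap σ hRp, hO', Wmap_repW σ W p q hodd hpq]
  have hpow : ∀ n, wpow (wmul O (repW W q)) n = Wmap σ (wpow (wmul O (repW W p)) n) := by
    intro n
    rw [key]
    exact wpow_symmap σ (wmul_ground hRp) n
  constructor
  · rintro ⟨n, hn, h⟩
    exact ⟨n, hn, by rw [hpow n, h]; rfl⟩
  · rintro ⟨n, hn, h⟩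
    rw [hpow n] at h
    exact ⟨n, hn, Finset.image_eq_empty.mp h⟩
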